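/- Let (R, ⊕, ·) be a fully idempotent semihyperring. For fuzzy hyperideals δ₁, δ₂ of R, O_{δ₁} = O_{δ₂} if and only if δ₁ = δ₂. -/

import Mathlib

/-- The unit interval `[0,1]` is a complete lattice. -/
noncomputable instance : Fact ((0:ℝ) ≤ 1) := ⟨zero_le_one⟩

/-- A semihyperring `(R, ⊕, ·)`: a hyperoperation `hadd` (with nonempty values),
a binary multiplication `mul`, and an element `zero`, satisfying commutativity and
(extended) associativity of `⊕`, associativity of `·`, two-sided distributivity of
`·` over `⊕` (as sets), and `0 ⊕ x = {x}`, `0·x = 0 = x·0`. -/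
class Semihyperring (R : Type*) where
  hadd : R → R → Set R
  mul : R → R → R
  zero : R
  hadd_nonempty : ∀ x y : R, (hadd x y).Nonempty
  hadd_comm : ∀ x y : R, hadd x y = hadd y x
  hadd_assoc : ∀ x y z : R, (⋃ w ∈ hadd y z, hadd x w) = ⋃ w ∈ hadd x y, hadd w z
  mul_assoc : ∀ x y z : R, mul (mul x y) z = mul x (mul y z)
  left_distrib : ∀ x y z : R, (fun w => mul x w) '' hadd y z = hadd (mul x y) (mul x z)
  right_distrib : ∀ x y z : R, (fun w => mul w z) '' hadd x y = hadd (mul x z) (mul y z)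
  zero_hadd : ∀ x : R, hadd zero x = {x}
  hadd_zero : ∀ x : R, hadd x zero = {x}
  zero_mul : ∀ x : R, mul zero x = zero
  mul_zero : ∀ x : R, mul x zero = zero

namespace Semihyperring

variable {R : Type*} [Semihyperring R]

/-- The hyperoperation `⊕` extended to subsets: `A ⊕ B = ⋃ {a ⊕ b : a ∈ A, b ∈ B}`. -/
def haddSet (A B : Set R) : Set R := ⋃ a ∈ A, ⋃ b ∈ B, hadd a b

/-- The hypersum `x₁ ⊕ x₂ ⊕ ⋯ ⊕ xₚ` of a list of elements (the empty hypersum is `{0}`,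
which is neutral since `0 ⊕ x = {x}`). -/
def hsumList : List R → Set R
  | [] => {zero}
  | x :: xs => haddSet {x} (hsumList xs)

/-- A (two-sided) hyperideal: a nonempty subset closed under `⊕` and under
multiplication by arbitrary elements of `R` on both sides. -/
def IsHyperideal (I : Set R) : Prop :=
  I.Nonempty ∧ (∀ x ∈ I, ∀ y ∈ I, hadd x y ⊆ I) ∧
    (∀ r : R, ∀ x ∈ I, mul r x ∈ I ∧ mul x r ∈ I)

/-- A right hyperideal. -/
def IsRightHyperideal (I : Set R) : Prop :=
  I.Nonempty ∧ (∀ x ∈ I, ∀ y ∈ I, hadd x y ⊆ I) ∧ (∀ x ∈ I, ∀ r : R, mul x r ∈ I)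

/-- A left hyperideal. -/
def IsLeftHyperideal (I : Set R) : Prop :=
  I.Nonempty ∧ (∀ x ∈ I, ∀ y ∈ I, hadd x y ⊆ I) ∧ (∀ x ∈ I, ∀ r : R, mul r x ∈ I)

/-- The product of two subsets:
`AB = {x : x ∈ a₁b₁ ⊕ ⋯ ⊕ aₚbₚ for some p ≥ 1, aᵢ ∈ A, bᵢ ∈ B}`. -/
def setProd (A B : Set R) : Set R :=
  {x | ∃ l : List (R × R), l ≠ [] ∧ (∀ p ∈ l, p.1 ∈ A ∧ p.2 ∈ B) ∧
    x ∈ hsumList (l.map fun p => mul p.1 p.2)}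

/-- `R` is fully idempotent if every hyperideal `I` satisfies `I² = I`. -/
def FullyIdempotent (R : Type*) [Semihyperring R] : Prop :=
  ∀ I : Set R, IsHyperideal I → setProd I I = I

/-- `R` is (von Neumann) regular if every `x` satisfies `x = x·a·x` for some `a`. -/
def Regular (R : Type*) [Semihyperring R] : Prop :=
  ∀ x : R, ∃ a : R, x = mul (mul x a) x

/-- A fuzzy hyperideal of `R`: a function `μ : R → [0,1]` with
`inf {μ z : z ∈ x ⊕ y} ≥ min (μ x) (μ y)` and `μ (x·y) ≥ max (μ x) (μ y)`. -/
def IsFuzzyHyperideal (μ : R → unitInterval) : Prop :=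
  (∀ x y : R, μ x ⊓ μ y ≤ ⨅ z ∈ hadd x y, μ z) ∧
  (∀ x y : R, μ x ⊔ μ y ≤ μ (mul x y))

/-- A fuzzy right hyperideal: `inf {λ z : z ∈ x ⊕ y} ≥ min (λ x) (λ y)` and `λ (x·y) ≥ λ x`. -/
def IsFuzzyRightHyperideal (μ : R → unitInterval) : Prop :=
  (∀ x y : R, μ x ⊓ μ y ≤ ⨅ z ∈ hadd x y, μ z) ∧
  (∀ x y : R, μ x ≤ μ (mul x y))

/-- A fuzzy left hyperideal: `inf {λ z : z ∈ x ⊕ y} ≥ min (λ x) (λ y)` and `λ (x·y) ≥ λ y`. -/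
def IsFuzzyLeftHyperideal (μ : R → unitInterval) : Prop :=
  (∀ x y : R, μ x ⊓ μ y ≤ ⨅ z ∈ hadd x y, μ z) ∧
  (∀ x y : R, μ y ≤ μ (mul x y))

/-- The product `λμ` of fuzzy subsets:
`(λμ)(x) = ⋁ { ⋀_{1≤i≤p} (λ yᵢ ⊓ μ zᵢ) : p ≥ 1, x ∈ y₁z₁ ⊕ ⋯ ⊕ yₚzₚ }`. -/
noncomputable def fprod (lam mu : R → unitInterval) (x : R) : unitInterval :=
  sSup {t | ∃ l : List (R × R), l ≠ [] ∧
    x ∈ hsumList (l.map fun p => mul p.1 p.2) ∧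
    t = ⨅ p ∈ l, lam p.1 ⊓ mu p.2}

/-- The sum `λ ⊕ μ` of fuzzy subsets:
`(λ ⊕ μ)(x) = ⋁ { λ y ⊓ μ z : x ∈ y ⊕ z }`. -/
noncomputable def fsum (lam mu : R → unitInterval) (x : R) : unitInterval :=
  sSup {t | ∃ y z : R, x ∈ hadd y z ∧ t = lam y ⊓ mu z}

/-- The composition `λ ∘ μ` of fuzzy subsets:
`(λ ∘ μ)(x) = ⋁ { λ y ⊓ μ z : x = y·z }` (with `⋁ ∅ = 0`). -/
noncomputable def fcomp (lam mu : R → unitInterval) (x : R) : unitInterval :=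
  sSup {t | ∃ y z : R, x = mul y z ∧ t = lam y ⊓ mu z}

/-- A fuzzy prime hyperideal: a fuzzy hyperideal `η` such that for all fuzzy hyperideals
`λ, μ`, `λμ ≤ η` implies `λ ≤ η` or `μ ≤ η`. -/
def IsFuzzyPrimeHyperideal (η : R → unitInterval) : Prop :=
  IsFuzzyHyperideal η ∧ ∀ lam mu : R → unitInterval, IsFuzzyHyperideal lam →
    IsFuzzyHyperideal mu → fprod lam mu ≤ η → lam ≤ η ∨ mu ≤ η

/-- A fuzzy irreducible hyperideal: a fuzzy hyperideal `η` such that for all fuzzy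
hyperideals `λ, μ`, `min (λ, μ) = η` (pointwise) implies `λ = η` or `μ = η`. -/
def IsFuzzyIrreducibleHyperideal (η : R → unitInterval) : Prop :=
  IsFuzzyHyperideal η ∧ ∀ lam mu : R → unitInterval, IsFuzzyHyperideal lam →
    IsFuzzyHyperideal mu → lam ⊓ mu = η → lam = η ∨ mu = η

/-- `FP R`: the set of proper fuzzy prime hyperideals of `R`
(`η` is proper if it is not the constant function `1`). -/
def FP (R : Type*) [Semihyperring R] : Set (R → unitInterval) :=
  {η | IsFuzzyPrimeHyperideal η ∧ η ≠ fun _ => 1}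

/-- `O λ = {μ ∈ FP R : λ ≰ μ}`. -/
def O (lam : R → unitInterval) : Set (R → unitInterval) :=
  {mu ∈ FP R | ¬ lam ≤ mu}

/-- The sum `Σᵢ ηᵢ` of an arbitrary family of fuzzy subsets:
`(Σᵢ ηᵢ)(x) = ⋁ { ⋀_{1≤k≤p} η_{i_k} (x_k) : p ≥ 1, x ∈ x₁ ⊕ ⋯ ⊕ xₚ }`. -/
noncomputable def famSum {ι : Type*} (η : ι → R → unitInterval) (x : R) : unitInterval :=
  sSup {t | ∃ l : List (ι × R), l ≠ [] ∧ x ∈ hsumList (l.map Prod.snd) ∧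
    t = ⨅ p ∈ l, η p.1 p.2}

/-! ### Auxiliary lemmas -/

theorem mem_haddSet {A B : Set R} {z : R} :
    z ∈ haddSet A B ↔ ∃ a ∈ A, ∃ b ∈ B, z ∈ hadd a b := by
  simp [haddSet]

theorem haddSet_singleton (a b : R) : haddSet {a} ({b} : Set R) = hadd a b := by
  simp [haddSet]

theorem haddSet_comm (A B : Set R) : haddSet A B = haddSet B A := by
  ext z; simp only [mem_haddSet]
  constructor <;> rintro ⟨a, ha, b, hb, hz⟩ <;> exact ⟨b, hb, a, ha, by rwa [hadd_comm]⟩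

theorem haddSet_singleton_left (x : R) (B : Set R) :
    haddSet {x} B = ⋃ b ∈ B, hadd x b := by
  simp [haddSet]

theorem haddSet_assoc (A B C : Set R) :
    haddSet A (haddSet B C) = haddSet (haddSet A B) C := by
  ext z
  simp only [mem_haddSet]
  constructor
  · rintro ⟨a, ha, w, hw, hz⟩
    obtain ⟨b, hb, c, hc, hw⟩ := hw
    have h1 : z ∈ ⋃ w ∈ hadd b c, hadd a w := Set.mem_biUnion hw hz
    rw [hadd_assoc] at h1
    obtain ⟨w', hw', hz'⟩ := by simpa using h1
    exact ⟨w', ⟨a, ha, b, hb, hw'⟩, c, hc, hz'⟩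
  · rintro ⟨w, hw, c, hc, hz⟩
    obtain ⟨a, ha, b, hb, hw⟩ := hw
    have h1 : z ∈ ⋃ w ∈ hadd a b, hadd w c := Set.mem_biUnion hw hz
    rw [← hadd_assoc] at h1
    obtain ⟨w', hw', hz'⟩ := by simpa using h1
    exact ⟨a, ha, w', ⟨b, hb, c, hc, hw'⟩, hz'⟩

theorem haddSet_zero_left (B : Set R) : haddSet {zero} B = B := by
  ext z; simp [haddSet, zero_hadd]

theorem hsumList_append (l1 l2 : List R) :
    hsumList (l1 ++ l2) = haddSet (hsumList l1) (hsumList l2) := by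
  induction l1 with
  | nil => simp [hsumList, haddSet_zero_left]
  | cons x xs ih =>
      simp only [List.cons_append, hsumList]
      rw [ih, haddSet_assoc]

theorem hsumList_singleton (a : R) : hsumList [a] = {a} := by
  simp [hsumList, haddSet_singleton, hadd_zero]



theorem mul_mem_hsumList_left {u : R} {l : List R} (hu : u ∈ hsumList l) (r : R) :
    mul r u ∈ hsumList (l.map (fun t => mul r t)) := by
  induction l generalizing u with
  | nil =>
      simp only [hsumList, List.map_nil, Set.mem_singleton_iff] at hu ⊢
      rw [hu, mul_zero]
  | cons x xs ih =>
      simp only [hsumList, haddSet_singleton_left, Set.mem_iUnion] at hu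
      obtain ⟨w, hw, hu⟩ := hu
      have h1 : mul r u ∈ (fun t => mul r t) '' hadd x w := ⟨u, hu, rfl⟩
      rw [left_distrib] at h1
      simp only [List.map_cons, hsumList, haddSet_singleton_left, Set.mem_iUnion]
      exact ⟨mul r w, ih hw, h1⟩

theorem mul_mem_hsumList_right {u : R} {l : List R} (hu : u ∈ hsumList l) (r : R) :
    mul u r ∈ hsumList (l.map (fun t => mul t r)) := by
  induction l generalizing u with
  | nil =>
      simp only [hsumList, List.map_nil, Set.mem_singleton_iff] at hu ⊢
      rw [hu, zero_mul]
  | cons x xs ih =>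
      simp only [hsumList, haddSet_singleton_left, Set.mem_iUnion] at hu
      obtain ⟨w, hw, hu⟩ := hu
      have h1 : mul u r ∈ (fun t => mul t r) '' hadd x w := ⟨u, hu, rfl⟩
      rw [right_distrib] at h1
      simp only [List.map_cons, hsumList, haddSet_singleton_left, Set.mem_iUnion]
      exact ⟨mul w r, ih hw, h1⟩

/-- Lower bound along hypersums for fuzzy hyperideal-like functions. -/
theorem hsum_lb {μ : R → unitInterval}
    (hμ : ∀ x y : R, μ x ⊓ μ y ≤ ⨅ z ∈ hadd x y, μ z)
    {c : unitInterval} {l : List R} (hl : l ≠ []) (hc : ∀ t ∈ l, c ≤ μ t) :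
    ∀ z ∈ hsumList l, c ≤ μ z := by
  induction l with
  | nil => exact absurd rfl hl
  | cons x xs ih =>
      intro z hz
      rcases eq_or_ne xs [] with rfl | hxs
      · rw [show (x :: ([] : List R)) = [x] from rfl, hsumList_singleton] at hz
        rw [Set.mem_singleton_iff] at hz
        rw [hz]; exact hc x (by simp)
      · simp only [hsumList, haddSet_singleton_left, Set.mem_iUnion] at hz
        obtain ⟨w, hw, hz⟩ := hz
        have h1 : c ≤ μ x ⊓ μ w :=
          le_inf (hc x (by simp)) (ih hxs (fun t ht => hc t (by simp [ht])) w hw)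
        refine h1.trans ((hμ x w).trans ?_)
        exact biInf_le μ hz

/-- interior: the hyperideal generated by `x`. -/
def GenForm (x t : R) : Prop :=
  t = x ∨ (∃ r, t = mul r x) ∨ (∃ s, t = mul x s) ∨ (∃ r s, t = mul (mul r x) s)

def gen (x : R) : Set R :=
  {z | ∃ l : List R, l ≠ [] ∧ (∀ t ∈ l, GenForm x t) ∧ z ∈ hsumList l}

theorem mem_gen_self (x : R) : x ∈ gen x :=
  ⟨[x], by simp, by simp [GenForm], by rw [hsumList_singleton]; rfl⟩

theorem genForm_mul_left (x r : R) {t : R} (ht : GenForm x t) : GenForm x (mul r t) := by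
  rcases ht with rfl | ⟨r', rfl⟩ | ⟨s', rfl⟩ | ⟨r', s', rfl⟩
  · exact Or.inr (Or.inl ⟨r, rfl⟩)
  · exact Or.inr (Or.inl ⟨mul r r', by simp only [mul_assoc]⟩)
  · exact Or.inr (Or.inr (Or.inr ⟨r, s', by simp only [mul_assoc]⟩))
  · exact Or.inr (Or.inr (Or.inr ⟨mul r r', s', by simp only [mul_assoc]⟩))

theorem genForm_mul_right (x s : R) {t : R} (ht : GenForm x t) : GenForm x (mul t s) := by
  rcases ht with rfl | ⟨r', rfl⟩ | ⟨s', rfl⟩ | ⟨r', s', rfl⟩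
  · exact Or.inr (Or.inr (Or.inl ⟨s, rfl⟩))
  · exact Or.inr (Or.inr (Or.inr ⟨r', s, rfl⟩))
  · exact Or.inr (Or.inr (Or.inl ⟨mul s' s, by simp only [mul_assoc]⟩))
  · exact Or.inr (Or.inr (Or.inr ⟨r', mul s' s, by simp only [mul_assoc]⟩))

theorem gen_isHyperideal (x : R) : IsHyperideal (gen x) := by
  refine ⟨⟨x, mem_gen_self x⟩, ?_, ?_⟩
  · rintro u ⟨l1, hl1, hf1, hu⟩ v ⟨l2, hl2, hf2, hv⟩
    intro z hz
    refine ⟨l1 ++ l2, by simp [hl1], ?_, ?_⟩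
    · intro t ht; rcases List.mem_append.1 ht with h | h
      exacts [hf1 t h, hf2 t h]
    · rw [hsumList_append, mem_haddSet]
      exact ⟨u, hu, v, hv, hz⟩
  · rintro r u ⟨l, hl, hf, hu⟩
    constructor
    · exact ⟨l.map (fun t => mul r t), by simp [hl], by
        intro t ht
        simp only [List.mem_map] at ht
        obtain ⟨t', ht', rfl⟩ := ht
        exact genForm_mul_left x r (hf t' ht'), mul_mem_hsumList_left hu r⟩
    · exact ⟨l.map (fun t => mul t r), by simp [hl], by
        intro t ht
        simp only [List.mem_map] at ht
        obtain ⟨t', ht', rfl⟩ := ht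
        exact genForm_mul_right x r (hf t' ht'), mul_mem_hsumList_right hu r⟩

theorem fuzzy_lb_on_gen {lam : R → unitInterval} (hlam : IsFuzzyHyperideal lam)
    {x z : R} (hz : z ∈ gen x) : lam x ≤ lam z := by
  obtain ⟨l, hl, hf, hz⟩ := hz
  refine hsum_lb hlam.1 hl (fun t ht => ?_) z hz
  rcases hf t ht with rfl | ⟨r, rfl⟩ | ⟨s, rfl⟩ | ⟨r, s, rfl⟩
  · exact le_rfl
  · exact le_trans (le_sup_right.trans (hlam.2 r x)) le_rfl
  · exact le_trans (le_sup_left.trans (hlam.2 x s)) le_rfl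
  · exact le_trans (le_sup_left.trans (hlam.2 x s)) (le_sup_right.trans (hlam.2 r (mul x s)) |>.trans (by rw [← mul_assoc]))



theorem exists_lt_of_lt_sSup' {S : Set unitInterval} {c : unitInterval}
    (h : c < sSup S) : ∃ t ∈ S, c < t := by
  by_contra hc
  push_neg at hc
  exact absurd (sSup_le hc) (not_le.2 h)

/-- Key: in a fully idempotent semihyperring, `λ ⊓ μ ≤ λμ` pointwise. -/
theorem inf_le_fprod (h : FullyIdempotent R) {lam mu : R → unitInterval}
    (hlam : IsFuzzyHyperideal lam) (hmu : IsFuzzyHyperideal mu) (x : R) :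
    lam x ⊓ mu x ≤ fprod lam mu x := by
  have hx : x ∈ setProd (gen x) (gen x) := by
    rw [h (gen x) (gen_isHyperideal x)]; exact mem_gen_self x
  obtain ⟨l, hl, hmem, hx⟩ := hx
  refine le_sSup_of_le ⟨l, hl, hx, rfl⟩ ?_
  refine le_iInf₂ fun p hp => ?_
  exact le_inf (inf_le_left.trans (fuzzy_lb_on_gen hlam (hmem p hp).1))
    (inf_le_right.trans (fuzzy_lb_on_gen hmu (hmem p hp).2))

/-- The join of two fuzzy hyperideals. -/
noncomputable def joinIdeal (mu lam : R → unitInterval) (x : R) : unitInterval :=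
  sSup {t | t = mu x ∨ t = lam x ∨ ∃ u v, x ∈ hadd u v ∧ t = mu u ⊓ lam v}

theorem le_joinIdeal_left (mu lam : R → unitInterval) : mu ≤ joinIdeal mu lam :=
  fun x => le_sSup (Or.inl rfl)

theorem le_joinIdeal_right (mu lam : R → unitInterval) : lam ≤ joinIdeal mu lam :=
  fun x => le_sSup (Or.inr (Or.inl rfl))

theorem joinIdeal_isFuzzy {mu lam : R → unitInterval} (hmu : IsFuzzyHyperideal mu)
    (hlam : IsFuzzyHyperideal lam) : IsFuzzyHyperideal (joinIdeal mu lam) := by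
  set ν := joinIdeal mu lam with hν
  have hmul : ∀ x y : R, ν x ⊔ ν y ≤ ν (mul x y) := by
    intro x y
    refine sup_le ?_ ?_
    · refine sSup_le fun t ht => ?_
      rcases ht with rfl | rfl | ⟨u, v, hx, rfl⟩
      · exact le_sSup_of_le (Or.inl rfl) (le_sup_left.trans (hmu.2 x y))
      · exact le_sSup_of_le (Or.inr (Or.inl rfl)) (le_sup_left.trans (hlam.2 x y))
      · have h1 : mul x y ∈ (fun w => mul w y) '' hadd u v := ⟨x, hx, rfl⟩
        rw [right_distrib] at h1
        refine le_sSup_of_le (Or.inr (Or.inr ⟨mul u y, mul v y, h1, rfl⟩)) ?_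
        exact inf_le_inf (le_sup_left.trans (hmu.2 u y)) (le_sup_left.trans (hlam.2 v y))
    · refine sSup_le fun t ht => ?_
      rcases ht with rfl | rfl | ⟨u, v, hy, rfl⟩
      · exact le_sSup_of_le (Or.inl rfl) (le_sup_right.trans (hmu.2 x y))
      · exact le_sSup_of_le (Or.inr (Or.inl rfl)) (le_sup_right.trans (hlam.2 x y))
      · have h1 : mul x y ∈ (fun w => mul x w) '' hadd u v := ⟨y, hy, rfl⟩
        rw [left_distrib] at h1
        refine le_sSup_of_le (Or.inr (Or.inr ⟨mul x u, mul x v, h1, rfl⟩)) ?_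
        exact inf_le_inf (le_sup_right.trans (hmu.2 x u)) (le_sup_right.trans (hlam.2 x v))
  refine ⟨?_, hmul⟩
  intro x y
  refine le_iInf₂ fun z hz => ?_
  refine le_of_forall_lt fun c hc => ?_
  have hcx : c < ν x := hc.trans_le inf_le_left
  have hcy : c < ν y := hc.trans_le inf_le_right
  obtain ⟨t1, ht1, hct1⟩ := exists_lt_of_lt_sSup' hcx
  obtain ⟨t2, ht2, hct2⟩ := exists_lt_of_lt_sSup' hcy
  -- helper to conclude
  have conc : ∀ t ∈ {t | t = mu z ∨ t = lam z ∨ ∃ u v, z ∈ hadd u v ∧ t = mu u ⊓ lam v},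
      c < t → c < ν z := fun t ht hct => hct.trans_le (le_sSup ht)
  -- membership of z in rearranged hypersums
  have hmu' := hmu.1
  have hlam' := hlam.1
  have hinf : ∀ (f : R → unitInterval), (∀ a b : R, f a ⊓ f b ≤ ⨅ w ∈ hadd a b, f w) →
      ∀ a b : R, ∀ w ∈ hadd a b, f a ⊓ f b ≤ f w := by
    intro f hf a b w hw
    exact (hf a b).trans (biInf_le f hw)
  rcases ht1 with rfl | rfl | ⟨u1, v1, hx1, rfl⟩
  · rcases ht2 with rfl | rfl | ⟨u2, v2, hy2, rfl⟩
    · exact conc _ (Or.inl rfl) (lt_of_lt_of_le (lt_inf_iff.2 ⟨hct1, hct2⟩)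
        (hinf mu hmu' x y z hz))
    · exact conc _ (Or.inr (Or.inr ⟨x, y, hz, rfl⟩)) (lt_inf_iff.2 ⟨hct1, hct2⟩)
    · -- t1 = mu x, t2 = mu u2 ⊓ lam v2, y ∈ u2 ⊕ v2
      -- z ∈ x ⊕ (u2 ⊕ v2) = (x ⊕ u2) ⊕ v2
      have hz' : z ∈ haddSet {x} (hadd u2 v2) := by
        rw [haddSet_singleton_left]; exact Set.mem_biUnion hy2 hz
      rw [← haddSet_singleton u2 v2, haddSet_assoc, haddSet_singleton x u2] at hz'
      obtain ⟨w, hw, v, hv, hzw⟩ := mem_haddSet.1 hz'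
      rw [Set.mem_singleton_iff] at hv; subst hv
      refine conc _ (Or.inr (Or.inr ⟨w, v, hzw, rfl⟩)) ?_
      refine lt_inf_iff.2 ⟨?_, hct2.trans_le inf_le_right⟩
      exact (lt_inf_iff.2 ⟨hct1, hct2.trans_le inf_le_left⟩).trans_le (hinf mu hmu' x u2 w hw)
  · rcases ht2 with rfl | rfl | ⟨u2, v2, hy2, rfl⟩
    · exact conc _ (Or.inr (Or.inr ⟨y, x, (hadd_comm x y ▸ hz), rfl⟩))
        (lt_inf_iff.2 ⟨hct2, hct1⟩)
    · exact conc _ (Or.inr (Or.inl rfl)) (lt_of_lt_of_le (lt_inf_iff.2 ⟨hct1, hct2⟩)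
        (hinf lam hlam' x y z hz))
    · -- t1 = lam x, t2 = mu u2 ⊓ lam v2 : z ∈ x ⊕ (u2 ⊕ v2) = u2 ⊕ (x ⊕ v2)
      have hz' : z ∈ haddSet {x} (hadd u2 v2) := by
        rw [haddSet_singleton_left]; exact Set.mem_biUnion hy2 hz
      rw [hadd_comm u2 v2, ← haddSet_singleton v2 u2, haddSet_assoc,
        haddSet_singleton x v2] at hz'
      obtain ⟨w, hw, v, hv, hzw⟩ := mem_haddSet.1 hz'
      rw [Set.mem_singleton_iff] at hv; subst hv
      refine conc _ (Or.inr (Or.inr ⟨v, w, (hadd_comm w v ▸ hzw), rfl⟩)) ?_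
      refine lt_inf_iff.2 ⟨hct2.trans_le inf_le_left, ?_⟩
      exact (lt_inf_iff.2 ⟨hct1, hct2.trans_le inf_le_right⟩).trans_le (hinf lam hlam' x v2 w hw)
  · rcases ht2 with rfl | rfl | ⟨u2, v2, hy2, rfl⟩
    · -- symmetric to (μx, fsum) case with roles of x,y swapped
      have hz' : z ∈ haddSet {y} (hadd u1 v1) := by
        rw [haddSet_singleton_left]; exact Set.mem_biUnion hx1 (hadd_comm x y ▸ hz)
      rw [← haddSet_singleton u1 v1, haddSet_assoc, haddSet_singleton y u1] at hz'
      obtain ⟨w, hw, v, hv, hzw⟩ := mem_haddSet.1 hz'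
      rw [Set.mem_singleton_iff] at hv; subst hv
      refine conc _ (Or.inr (Or.inr ⟨w, v, hzw, rfl⟩)) ?_
      refine lt_inf_iff.2 ⟨?_, hct1.trans_le inf_le_right⟩
      exact (lt_inf_iff.2 ⟨hct2, hct1.trans_le inf_le_left⟩).trans_le (hinf mu hmu' y u1 w hw)
    · have hz' : z ∈ haddSet {y} (hadd u1 v1) := by
        rw [haddSet_singleton_left]; exact Set.mem_biUnion hx1 (hadd_comm x y ▸ hz)
      rw [hadd_comm u1 v1, ← haddSet_singleton v1 u1, haddSet_assoc,
        haddSet_singleton y v1] at hz'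
      obtain ⟨w, hw, v, hv, hzw⟩ := mem_haddSet.1 hz'
      rw [Set.mem_singleton_iff] at hv; subst hv
      refine conc _ (Or.inr (Or.inr ⟨v, w, (hadd_comm w v ▸ hzw), rfl⟩)) ?_
      refine lt_inf_iff.2 ⟨hct1.trans_le inf_le_left, ?_⟩
      exact (lt_inf_iff.2 ⟨hct2, hct1.trans_le inf_le_right⟩).trans_le (hinf lam hlam' y v1 w hw)
    · -- both fsum: z ∈ (u1⊕v1) ⊕ (u2⊕v2) = (u1⊕u2) ⊕ (v1⊕v2)
      have hz' : z ∈ haddSet (hadd u1 v1) (hadd u2 v2) :=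
        mem_haddSet.2 ⟨x, hx1, y, hy2, hz⟩
      have hre : haddSet (hadd u1 v1) (hadd u2 v2)
          = haddSet (hadd u1 u2) (hadd v1 v2) := by
        rw [← haddSet_singleton u1 v1, ← haddSet_singleton u2 v2,
          ← haddSet_singleton u1 u2, ← haddSet_singleton v1 v2]
        have e1 : haddSet (haddSet {u1} {v1}) {u2} = haddSet (haddSet {u1} {u2}) {v1} := by
          rw [← haddSet_assoc, haddSet_comm {v1} {u2}, haddSet_assoc]
        rw [haddSet_assoc, e1, ← haddSet_assoc]
      rw [hre] at hz'
      obtain ⟨a, ha, b, hb, hzab⟩ := mem_haddSet.1 hz'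
      refine conc _ (Or.inr (Or.inr ⟨a, b, hzab, rfl⟩)) ?_
      refine lt_inf_iff.2 ⟨?_, ?_⟩
      · exact (lt_inf_iff.2 ⟨hct1.trans_le inf_le_left, hct2.trans_le inf_le_left⟩).trans_le
          (hinf mu hmu' u1 u2 a ha)
      · exact (lt_inf_iff.2 ⟨hct1.trans_le inf_le_right, hct2.trans_le inf_le_right⟩).trans_le
          (hinf lam hlam' v1 v2 b hb)


/-- Claim: if `λ₁ ⊓ λ₂ ≤ μ` then `μ (yz) ≥ (μ ∨ λ₁) y ⊓ (μ ∨ λ₂) z`. -/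
theorem mu_mul_ge {mu lam1 lam2 : R → unitInterval} (hmu : IsFuzzyHyperideal mu)
    (hl1 : IsFuzzyHyperideal lam1) (hl2 : IsFuzzyHyperideal lam2)
    (hle : lam1 ⊓ lam2 ≤ mu) (y z : R) :
    joinIdeal mu lam1 y ⊓ joinIdeal mu lam2 z ≤ mu (mul y z) := by
  have hinf : ∀ (f : R → unitInterval), (∀ a b : R, f a ⊓ f b ≤ ⨅ w ∈ hadd a b, f w) →
      ∀ a b : R, ∀ w ∈ hadd a b, f a ⊓ f b ≤ f w := fun f hf a b w hw =>
    (hf a b).trans (biInf_le f hw)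
  have hmm : ∀ a b : R, lam1 a ⊓ lam2 b ≤ mu (mul a b) := by
    intro a b
    have h1 : lam1 a ≤ lam1 (mul a b) := le_sup_left.trans (hl1.2 a b)
    have h2 : lam2 b ≤ lam2 (mul a b) := le_sup_right.trans (hl2.2 a b)
    exact (inf_le_inf h1 h2).trans (hle (mul a b))
  refine le_of_forall_lt fun c hc => ?_
  have hcy : c < joinIdeal mu lam1 y := hc.trans_le inf_le_left
  have hcz : c < joinIdeal mu lam2 z := hc.trans_le inf_le_right
  obtain ⟨t1, ht1, hct1⟩ := exists_lt_of_lt_sSup' hcy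
  obtain ⟨t2, ht2, hct2⟩ := exists_lt_of_lt_sSup' hcz
  rcases ht1 with rfl | rfl | ⟨u1, v1, hy1, rfl⟩
  · -- t1 = mu y
    exact hct1.trans_le (le_sup_left.trans (hmu.2 y z))
  · rcases ht2 with rfl | rfl | ⟨u2, v2, hz2, rfl⟩
    · exact hct2.trans_le (le_sup_right.trans (hmu.2 y z))
    · -- lam1 y, lam2 z
      exact (lt_inf_iff.2 ⟨hct1, hct2⟩).trans_le (hmm y z)
    · -- lam1 y, mu u2 ⊓ lam2 v2, z ∈ u2 ⊕ v2 : yz ∈ y·u2 ⊕ y·v2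
      have h1 : mul y z ∈ (fun w => mul y w) '' hadd u2 v2 := ⟨z, hz2, rfl⟩
      rw [left_distrib] at h1
      refine lt_of_lt_of_le ?_ (hinf mu hmu.1 (mul y u2) (mul y v2) _ h1)
      refine lt_inf_iff.2 ⟨?_, ?_⟩
      · exact (hct2.trans_le inf_le_left).trans_le (le_sup_right.trans (hmu.2 y u2))
      · exact (lt_inf_iff.2 ⟨hct1, hct2.trans_le inf_le_right⟩).trans_le (hmm y v2)
  · rcases ht2 with rfl | rfl | ⟨u2, v2, hz2, rfl⟩
    · exact hct2.trans_le (le_sup_right.trans (hmu.2 y z))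
    · -- mu u1 ⊓ lam1 v1 (y ∈ u1⊕v1), lam2 z : yz ∈ u1·z ⊕ v1·z
      have h1 : mul y z ∈ (fun w => mul w z) '' hadd u1 v1 := ⟨y, hy1, rfl⟩
      rw [right_distrib] at h1
      refine lt_of_lt_of_le ?_ (hinf mu hmu.1 (mul u1 z) (mul v1 z) _ h1)
      refine lt_inf_iff.2 ⟨?_, ?_⟩
      · exact (hct1.trans_le inf_le_left).trans_le (le_sup_left.trans (hmu.2 u1 z))
      · exact (lt_inf_iff.2 ⟨hct1.trans_le inf_le_right, hct2⟩).trans_le (hmm v1 z)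
    · -- both join forms
      have h1 : mul y z ∈ (fun w => mul w z) '' hadd u1 v1 := ⟨y, hy1, rfl⟩
      rw [right_distrib] at h1
      refine lt_of_lt_of_le ?_ (hinf mu hmu.1 (mul u1 z) (mul v1 z) _ h1)
      refine lt_inf_iff.2 ⟨?_, ?_⟩
      · exact (hct1.trans_le inf_le_left).trans_le (le_sup_left.trans (hmu.2 u1 z))
      · -- mu (v1 z) : v1·z ∈ v1·u2 ⊕ v1·v2
        have h2 : mul v1 z ∈ (fun w => mul v1 w) '' hadd u2 v2 := ⟨z, hz2, rfl⟩
        rw [left_distrib] at h2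
        refine lt_of_lt_of_le ?_ (hinf mu hmu.1 (mul v1 u2) (mul v1 v2) _ h2)
        refine lt_inf_iff.2 ⟨?_, ?_⟩
        · exact (hct2.trans_le inf_le_left).trans_le (le_sup_right.trans (hmu.2 v1 u2))
        · exact (lt_inf_iff.2 ⟨hct1.trans_le inf_le_right,
            hct2.trans_le inf_le_right⟩).trans_le (hmm v1 v2)

theorem fprod_le_of_pointwise {lam mu eta : R → unitInterval}
    (heta : IsFuzzyHyperideal eta)
    (hp : ∀ y z : R, lam y ⊓ mu z ≤ eta (mul y z)) : fprod lam mu ≤ eta := by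
  intro x
  refine sSup_le fun t ht => ?_
  obtain ⟨l, hl, hx, rfl⟩ := ht
  set c := ⨅ p ∈ l, lam p.1 ⊓ mu p.2 with hcdef
  have hlb : ∀ t ∈ l.map (fun p : R × R => mul p.1 p.2), c ≤ eta t := by
    intro t ht
    simp only [List.mem_map] at ht
    obtain ⟨p, hp', rfl⟩ := ht
    exact (iInf₂_le p hp').trans (hp p.1 p.2)
  exact hsum_lb heta.1 (by simpa using hl) hlb x hx

/-- A maximal element (above d2, with fixed value at a) is fuzzy prime. -/
theorem maximal_is_prime (h : FullyIdempotent R) {d2 mu : R → unitInterval} {a : R}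
    (hmu : IsFuzzyHyperideal mu) (hd2 : d2 ≤ mu)
    (hmax : ∀ nu : R → unitInterval, IsFuzzyHyperideal nu → d2 ≤ nu → nu a = mu a →
      mu ≤ nu → nu = mu) :
    IsFuzzyPrimeHyperideal mu := by
  refine ⟨hmu, fun lam1 lam2 hl1 hl2 hprod => ?_⟩
  by_contra hcon
  push_neg at hcon
  obtain ⟨hn1, hn2⟩ := hcon
  -- λ₁ ⊓ λ₂ ≤ μ
  have hle : lam1 ⊓ lam2 ≤ mu := fun x =>
    (inf_le_fprod h hl1 hl2 x).trans (hprod x)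
  set nu1 := joinIdeal mu lam1 with hnu1
  set nu2 := joinIdeal mu lam2 with hnu2
  have hfn1 : IsFuzzyHyperideal nu1 := joinIdeal_isFuzzy hmu hl1
  have hfn2 : IsFuzzyHyperideal nu2 := joinIdeal_isFuzzy hmu hl2
  -- ν₁ ⊓ ν₂ ≤ μ
  have hkey : nu1 ⊓ nu2 ≤ mu := by
    intro x
    refine (inf_le_fprod h hfn1 hfn2 x).trans ?_
    exact fprod_le_of_pointwise hmu (mu_mul_ge hmu hl1 hl2 hle) x
  -- at the point a : min (ν₁ a) (ν₂ a) ≤ μ a and both ≥ μ a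
  have h1a : mu a ≤ nu1 a := le_joinIdeal_left mu lam1 a
  have h2a : mu a ≤ nu2 a := le_joinIdeal_left mu lam2 a
  have hia : nu1 a ⊓ nu2 a ≤ mu a := by simpa using hkey a
  have : nu1 a = mu a ∨ nu2 a = mu a := by
    rcases le_total (nu1 a) (nu2 a) with hh | hh
    · exact Or.inl (le_antisymm (by simpa [inf_eq_left.2 hh] using hia) h1a)
    · exact Or.inr (le_antisymm (by simpa [inf_eq_right.2 hh] using hia) h2a)
  rcases this with he | he
  · have := hmax nu1 hfn1 (hd2.trans (le_joinIdeal_left mu lam1)) he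
      (le_joinIdeal_left mu lam1)
    exact hn1 (this ▸ le_joinIdeal_right mu lam1)
  · have := hmax nu2 hfn2 (hd2.trans (le_joinIdeal_left mu lam2)) he
      (le_joinIdeal_left mu lam2)
    exact hn2 (this ▸ le_joinIdeal_right mu lam2)

/-- Existence of a maximal fuzzy hyperideal above d2 with prescribed value. -/
theorem exists_maximal (d2 : R → unitInterval) (h2 : IsFuzzyHyperideal d2) (a : R) :
    ∃ mu : R → unitInterval, IsFuzzyHyperideal mu ∧ d2 ≤ mu ∧ mu a = d2 a ∧
      ∀ nu : R → unitInterval, IsFuzzyHyperideal nu → d2 ≤ nu → nu a = mu a →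
        mu ≤ nu → nu = mu := by
  set S : Set (R → unitInterval) :=
    {nu | IsFuzzyHyperideal nu ∧ d2 ≤ nu ∧ nu a = d2 a} with hS
  have hzorn := zorn_le_nonempty₀ S ?_ d2 ⟨h2, le_rfl, rfl⟩
  · obtain ⟨m, hd2m, hmS, hmax⟩ := hzorn
    refine ⟨m, hmS.1, hmS.2.1, hmS.2.2, fun nu hnu hd2nu hnua hmnu => ?_⟩
    exact le_antisymm (hmax ⟨hnu, hd2nu, by rw [hnua, hmS.2.2]⟩ hmnu) hmnu
  · intro c hcS hchain y hy
    -- upper bound: pointwise sup over the chain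
    refine ⟨fun x => sSup ((fun f : R → unitInterval => f x) '' c), ⟨?_, ?_, ?_⟩, ?_⟩
    · constructor
      · intro x y'
        refine le_iInf₂ fun z hz => ?_
        refine le_of_forall_lt fun b hb => ?_
        obtain ⟨t1, ⟨f1, hf1, rfl⟩, hbt1⟩ :=
          exists_lt_of_lt_sSup' (hb.trans_le inf_le_left)
        obtain ⟨t2, ⟨f2, hf2, rfl⟩, hbt2⟩ :=
          exists_lt_of_lt_sSup' (hb.trans_le inf_le_right)
        rcases hchain.total hf1 hf2 with hf | hf
        · have : b < f2 x ⊓ f2 y' := lt_inf_iff.2 ⟨hbt1.trans_le (hf x), hbt2⟩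
          refine lt_of_lt_of_le (this.trans_le
            (((hcS hf2).1.1 x y').trans (biInf_le f2 hz))) (le_sSup ⟨f2, hf2, rfl⟩)
        · have : b < f1 x ⊓ f1 y' := lt_inf_iff.2 ⟨hbt1, hbt2.trans_le (hf y')⟩
          refine lt_of_lt_of_le (this.trans_le
            (((hcS hf1).1.1 x y').trans (biInf_le f1 hz))) (le_sSup ⟨f1, hf1, rfl⟩)
      · intro x y'
        refine sup_le (sSup_le ?_) (sSup_le ?_)
        · rintro t ⟨f, hf, rfl⟩
          exact (le_sup_left.trans ((hcS hf).1.2 x y')).trans (le_sSup ⟨f, hf, rfl⟩)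
        · rintro t ⟨f, hf, rfl⟩
          exact (le_sup_right.trans ((hcS hf).1.2 x y')).trans (le_sSup ⟨f, hf, rfl⟩)
    · intro x
      exact ((hcS hy).2.1 x).trans (le_sSup ⟨y, hy, rfl⟩)
    · refine le_antisymm (sSup_le ?_) (((hcS hy).2.2).symm.trans_le (le_sSup ⟨y, hy, rfl⟩))
      rintro t ⟨f, hf, rfl⟩
      exact le_of_eq (hcS hf).2.2
    · intro f hf x
      exact le_sSup ⟨f, hf, rfl⟩

theorem O_half (h : FullyIdempotent R) {d1 d2 : R → unitInterval}
    (h1 : IsFuzzyHyperideal d1) (h2 : IsFuzzyHyperideal d2)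
    (hO : O d1 ⊆ O d2) : d1 ≤ d2 := by
  intro a
  by_contra hc
  push_neg at hc
  obtain ⟨mu, hmu, hd2mu, hmua, hmax⟩ := exists_maximal d2 h2 a
  have hlt : mu a < d1 a := lt_of_le_of_lt (le_of_eq hmua) hc
  have hmua_lt : mu a < 1 := lt_of_lt_of_le hlt unitInterval.le_one'
  have hprime : IsFuzzyPrimeHyperideal mu := maximal_is_prime h hmu hd2mu hmax
  have hproper : mu ≠ fun _ => 1 := by
    intro hcon
    rw [hcon] at hmua_lt
    exact absurd hmua_lt (by simp)
  have hd1 : ¬ d1 ≤ mu := fun hle => absurd ((hle a).trans_lt hlt) (lt_irrefl _)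
  have : mu ∈ O d1 := ⟨⟨hprime, hproper⟩, hd1⟩
  exact (hO this).2 hd2mu

end Semihyperring

open Semihyperring in
/-- in a fully idempotent semihyperring, `O δ₁ = O δ₂` iff `δ₁ = δ₂`, for
fuzzy hyperideals `δ₁, δ₂`. -/
theorem O_injective {R : Type*} [Semihyperring R] (h : FullyIdempotent R)
    (d1 d2 : R → unitInterval) (h1 : IsFuzzyHyperideal d1) (h2 : IsFuzzyHyperideal d2) :
    O d1 = O d2 ↔ d1 = d2 := by
  constructor
  · intro hO
    exact le_antisymm (O_half h h1 h2 (le_of_eq hO)) (O_half h h2 h1 (ge_of_eq hO))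
  · rintro rfl; rfl
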